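/- Define f₀ : ℝ² → ℝ³ by f₀(ρ, φ) = (2ρ·cos φ, 2ρ·sin φ, √2·ρ²). Then f₀ is smooth and for every (ρ, φ) ∈ ℝ² and every (v₁, v₂) ∈ ℝ²: ‖Df₀(ρ,φ)(v₁,v₂)‖² = 4(1 + 2ρ²)·v₁² + 4ρ²·v₂². Moreover f₀ is strictly short for the hyperbolic metric: for every ρ ∈ (0,1), every φ, and every (v₁, v₂) ≠ (0,0), 4(1 + 2ρ²)·v₁² + 4ρ²·v₂² < 4·(v₁² + ρ²·v₂²)/(1 − ρ²)². -/

import Mathlib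

noncomputable section

abbrev E3 := EuclideanSpace ℝ (Fin 3)

open Real ContinuousLinearMap

def L (p : ℝ × ℝ) : ℝ × ℝ →L[ℝ] (Fin 3 → ℝ) :=
  ContinuousLinearMap.pi ![
    (2 * Real.cos p.2) • fst ℝ ℝ ℝ + (-(2 * p.1 * Real.sin p.2)) • snd ℝ ℝ ℝ,
    (2 * Real.sin p.2) • fst ℝ ℝ ℝ + (2 * p.1 * Real.cos p.2) • snd ℝ ℝ ℝ,
    (Real.sqrt 2 * (2 * p.1)) • fst ℝ ℝ ℝ]

theorem hL (p : ℝ × ℝ) :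
    HasFDerivAt (fun p : ℝ × ℝ => (![2 * p.1 * Real.cos p.2, 2 * p.1 * Real.sin p.2,
      Real.sqrt 2 * p.1 ^ 2] : Fin 3 → ℝ)) (L p) p := by
  rw [show (fun p : ℝ × ℝ => (![2 * p.1 * Real.cos p.2, 2 * p.1 * Real.sin p.2,
      Real.sqrt 2 * p.1 ^ 2] : Fin 3 → ℝ)) = fun p i =>
      (![fun p : ℝ × ℝ => 2 * p.1 * Real.cos p.2, fun p => 2 * p.1 * Real.sin p.2,
        fun p => Real.sqrt 2 * p.1 ^ 2] : Fin 3 → ℝ × ℝ → ℝ) i p from by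
    funext p i; fin_cases i <;> rfl]
  apply hasFDerivAt_pi.2
  intro i
  have hcos : HasFDerivAt (fun q : ℝ × ℝ => Real.cos q.2)
      ((-Real.sin p.2) • snd ℝ ℝ ℝ) p :=
    (Real.hasDerivAt_cos p.2).comp_hasFDerivAt p (hasFDerivAt_snd)
  have hsin : HasFDerivAt (fun q : ℝ × ℝ => Real.sin q.2)
      ((Real.cos p.2) • snd ℝ ℝ ℝ) p :=
    (Real.hasDerivAt_sin p.2).comp_hasFDerivAt p (hasFDerivAt_snd)
  fin_cases i
  · show HasFDerivAt (fun p : ℝ × ℝ => 2 * p.1 * Real.cos p.2) _ p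
    refine HasFDerivAt.congr_fderiv
      ((((hasFDerivAt_fst (𝕜 := ℝ) (p := p)).mul hcos).const_mul 2).congr_of_eventuallyEq
        (.of_forall fun q => by simp only [Pi.mul_apply]; ring)) ?_
    ext <;> simp <;> ring
  · show HasFDerivAt (fun p : ℝ × ℝ => 2 * p.1 * Real.sin p.2) _ p
    refine HasFDerivAt.congr_fderiv
      ((((hasFDerivAt_fst (𝕜 := ℝ) (p := p)).mul hsin).const_mul 2).congr_of_eventuallyEq
        (.of_forall fun q => by simp only [Pi.mul_apply]; ring)) ?_
    ext <;> simp <;> ring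
  · show HasFDerivAt (fun p : ℝ × ℝ => Real.sqrt 2 * p.1 ^ 2) _ p
    simp only [pow_two]
    refine HasFDerivAt.congr_fderiv (((hasFDerivAt_fst (𝕜 := ℝ) (p := p)).mul
      (hasFDerivAt_fst (𝕜 := ℝ) (p := p))).const_mul (Real.sqrt 2)) ?_
    ext <;> simp <;> ring

theorem stmt18 (f₀ : ℝ × ℝ → E3)
    (hf₀ : ∀ p : ℝ × ℝ,
      f₀ p = (WithLp.equiv 2 (Fin 3 → ℝ)).symm
        ![2 * p.1 * Real.cos p.2, 2 * p.1 * Real.sin p.2, Real.sqrt 2 * p.1 ^ 2]) :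
    ContDiff ℝ (⊤ : ℕ∞) f₀ ∧
    (∀ p v : ℝ × ℝ,
      ‖fderiv ℝ f₀ p v‖ ^ 2 = 4 * (1 + 2 * p.1 ^ 2) * v.1 ^ 2 + 4 * p.1 ^ 2 * v.2 ^ 2) ∧
    (∀ ρ φ v₁ v₂ : ℝ, 0 < ρ → ρ < 1 → (v₁, v₂) ≠ ((0 : ℝ), (0 : ℝ)) →
      4 * (1 + 2 * ρ ^ 2) * v₁ ^ 2 + 4 * ρ ^ 2 * v₂ ^ 2
        < 4 * (v₁ ^ 2 + ρ ^ 2 * v₂ ^ 2) / (1 - ρ ^ 2) ^ 2) := by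
  have hfe : f₀ = fun p => (PiLp.continuousLinearEquiv 2 ℝ (fun _ : Fin 3 => ℝ)).symm
      ![2 * p.1 * Real.cos p.2, 2 * p.1 * Real.sin p.2, Real.sqrt 2 * p.1 ^ 2] :=
    funext hf₀
  have hD : ∀ p : ℝ × ℝ, HasFDerivAt f₀
      (((PiLp.continuousLinearEquiv 2 ℝ (fun _ : Fin 3 => ℝ)).symm :
        (Fin 3 → ℝ) →L[ℝ] E3).comp (L p)) p := by
    intro p
    rw [hfe]
    exact ((PiLp.continuousLinearEquiv 2 ℝ (fun _ : Fin 3 => ℝ)).symm.toContinuousLinearMap.hasFDerivAt).comp p (hL p)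
  refine ⟨?_, ?_, ?_⟩
  · rw [hfe]
    refine ((PiLp.continuousLinearEquiv 2 ℝ (fun _ : Fin 3 => ℝ)).symm.contDiff).comp ?_
    refine contDiff_pi.2 fun i => ?_
    fin_cases i
    · exact (contDiff_const.mul contDiff_fst).mul (Real.contDiff_cos.comp contDiff_snd)
    · exact (contDiff_const.mul contDiff_fst).mul (Real.contDiff_sin.comp contDiff_snd)
    · exact contDiff_const.mul (contDiff_fst.pow 2)
  · intro p v
    rw [(hD p).fderiv]
    have hval : ∀ i : Fin 3,
        (((PiLp.continuousLinearEquiv 2 ℝ (fun _ : Fin 3 => ℝ)).symm :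
          (Fin 3 → ℝ) →L[ℝ] E3).comp (L p)) v i = L p v i := fun i => rfl
    rw [EuclideanSpace.norm_eq, Real.sq_sqrt (by positivity)]
    simp only [hval]
    have e0 : L p v 0 = 2 * Real.cos p.2 * v.1 + -(2 * p.1 * Real.sin p.2) * v.2 := by
      simp [L]
    have e1 : L p v 1 = 2 * Real.sin p.2 * v.1 + 2 * p.1 * Real.cos p.2 * v.2 := by
      simp [L]
    have e2 : L p v 2 = Real.sqrt 2 * (2 * p.1) * v.1 := by
      simp [L]
    rw [Fin.sum_univ_three, e0, e1, e2]
    simp only [Real.norm_eq_abs, sq_abs]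
    have hpyth := Real.sin_sq_add_cos_sq p.2
    have h2 : Real.sqrt 2 ^ 2 = 2 := Real.sq_sqrt (by norm_num)
    linear_combination (4 * v.1 ^ 2 + 4 * p.1 ^ 2 * v.2 ^ 2) * hpyth
      + (4 * p.1 ^ 2 * v.1 ^ 2) * h2
  · intro ρ φ v₁ v₂ h0 h1 hv
    have hvv : 0 < v₁ ^ 2 + v₂ ^ 2 := by
      rcases eq_or_ne v₁ 0 with h | h
      · have h2 : v₂ ≠ 0 := fun h2 => hv (by rw [h, h2])
        positivity
      · positivity
    have hlt : ρ ^ 2 < 1 := by nlinarith [mul_lt_mul_of_pos_left h1 h0]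
    have hd : (0:ℝ) < (1 - ρ ^ 2) ^ 2 := pow_pos (by linarith) 2
    rw [lt_div_iff₀ hd]
    have hr1 : (0:ℝ) ≤ 1 - ρ ^ 2 := by nlinarith [mul_lt_mul_of_pos_left h1 h0]
    have hρ4 : (0:ℝ) < ρ ^ 4 := by positivity
    nlinarith [mul_nonneg (mul_nonneg (pow_pos h0 4).le hr1) (sq_nonneg v₁),
      mul_nonneg (mul_nonneg (pow_pos h0 4).le hr1) (sq_nonneg v₂),
      mul_pos hρ4 hvv]
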